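/- arXiv:2508.03049 — 5 statements merged into one kernel-verified Lean document; each statement's English description precedes it below -/
import Mathlib

section
/- Let A ∈ ℝ^{m×m} be symmetric positive definite and B ∈ ℝ^{n×n} be symmetric positive semidefinite. If X ∈ ℝ^{m×n} satisfies A X + X B = 0, then X = 0. -/
open Matrix

open scoped MatrixOrder in
theorem psd_exists_mul_self {n : ℕ} (B : Matrix (Fin n) (Fin n) ℝ) (hB : B.PosSemidef) :
    ∃ C : Matrix (Fin n) (Fin n) ℝ, B = Cᴴ * C := by
  obtain ⟨X, hX, -, h⟩ :=
    sub_zero B ▸ CFC.exists_sqrt_of_isSelfAdjoint_of_quasispectrumRestricts hB.isHermitian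
      (QuasispectrumRestricts.nnreal_of_nonneg hB.nonneg)
  exact ⟨X, by rw [sub_zero] at h; rw [← h, show Xᴴ = X from hX.star_eq]⟩

/-- If `A` is symmetric positive definite, `B` is symmetric positive semidefinite, and
`A X + X B = 0`, then `X = 0`. -/
theorem stmt_2 (m n : ℕ) (A : Matrix (Fin m) (Fin m) ℝ) (B : Matrix (Fin n) (Fin n) ℝ)
    (hAsymm : Aᵀ = A) (hApd : ∀ x : Fin m → ℝ, x ≠ 0 → 0 < x ⬝ᵥ A.mulVec x)
    (hBsymm : Bᵀ = B) (hBpsd : ∀ x : Fin n → ℝ, 0 ≤ x ⬝ᵥ B.mulVec x)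
    (X : Matrix (Fin m) (Fin n) ℝ) (hX : A * X + X * B = 0) :
    X = 0 := by
  -- B is positive semidefinite in mathlib's sense
  have hBps : B.PosSemidef := by
    refine .of_dotProduct_mulVec_nonneg ?_ ?_
    · show Bᴴ = B
      simpa using hBsymm
    · intro x
      simpa using hBpsd x
  obtain ⟨C, hC⟩ := psd_exists_mul_self B hBps
  have hC' : B = Cᵀ * C := by simpa using hC
  -- the trace identity
  have key : (Xᵀ * (A * X)).trace + (Xᵀ * (X * B)).trace = 0 := by
    rw [← Matrix.trace_add, ← Matrix.mul_add, hX, Matrix.mul_zero, Matrix.trace_zero]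
  -- second trace is nonneg
  have h2 : 0 ≤ (Xᵀ * (X * B)).trace := by
    have e1 : Xᵀ * (X * B) = (Xᵀ * X * Cᵀ) * C := by
      rw [hC']; simp [Matrix.mul_assoc]
    rw [e1, Matrix.trace_mul_comm]
    have e2 : C * (Xᵀ * X * Cᵀ) = (C * Xᵀ) * (C * Xᵀ)ᵀ := by
      simp [Matrix.mul_assoc]
    rw [e2]
    set Y := C * Xᵀ
    have : (Y * Yᵀ).trace = ∑ i, ∑ j, Y i j * Y i j := by
      simp [Matrix.trace, Matrix.mul_apply, Matrix.diag]
    rw [this]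
    exact Finset.sum_nonneg fun i _ => Finset.sum_nonneg fun j _ => mul_self_nonneg _
  -- first trace is a sum of column quadratic forms
  have h1 : (Xᵀ * (A * X)).trace = ∑ j, (fun i => X i j) ⬝ᵥ A.mulVec (fun i => X i j) := by
    simp only [Matrix.trace, Matrix.diag, Matrix.mul_apply, Matrix.transpose_apply,
      dotProduct, Matrix.mulVec]
  have hterm : ∀ j, 0 ≤ (fun i => X i j) ⬝ᵥ A.mulVec (fun i => X i j) := by
    intro j
    by_cases h : (fun i => X i j) = 0
    · rw [h]; simp
    · exact le_of_lt (hApd _ h)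
  have hsum0 : ∑ j, (fun i => X i j) ⬝ᵥ A.mulVec (fun i => X i j) = 0 := by
    have hle : (Xᵀ * (A * X)).trace ≤ 0 := by linarith
    rw [h1] at hle
    have hge : 0 ≤ ∑ j, (fun i => X i j) ⬝ᵥ A.mulVec (fun i => X i j) :=
      Finset.sum_nonneg fun j _ => hterm j
    linarith
  have hcol : ∀ j, (fun i => X i j) = 0 := by
    intro j
    by_contra h
    have := hApd _ h
    have hz : (fun i => X i j) ⬝ᵥ A.mulVec (fun i => X i j) = 0 :=
      (Finset.sum_eq_zero_iff_of_nonneg (fun j _ => hterm j)).mp hsum0 j (Finset.mem_univ j)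
    linarith
  ext i j
  have := congrFun (hcol j) i
  simpa using this
end

section
/- Let A ∈ ℝ^{m×m} be symmetric positive definite and B ∈ ℝ^{n×n} be symmetric positive semidefinite. Then for every Q ∈ ℝ^{m×n}, the Sylvester equation A X + X B = Q admits exactly one solution X ∈ ℝ^{m×n}. -/
open Matrix

lemma trace_col (m n : ℕ) (A : Matrix (Fin m) (Fin m) ℝ) (X : Matrix (Fin m) (Fin n) ℝ) :
    trace (Xᵀ * (A * X)) = ∑ j, (fun i => X i j) ⬝ᵥ A.mulVec (fun i => X i j) := by
  simp [trace, diag, mul_apply, dotProduct, mulVec, Finset.mul_sum]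

lemma trace_row (m n : ℕ) (B : Matrix (Fin n) (Fin n) ℝ) (X : Matrix (Fin m) (Fin n) ℝ) :
    trace (Xᵀ * (X * B)) = ∑ i, (X i) ⬝ᵥ B.mulVec (X i) := by
  rw [trace_mul_comm]
  rw [trace]
  apply Finset.sum_congr rfl
  intro i _
  simp only [diag, mul_apply, dotProduct, mulVec, transpose_apply, Finset.mul_sum,
    Finset.sum_mul]
  rw [Finset.sum_comm]
  apply Finset.sum_congr rfl
  intro j _
  apply Finset.sum_congr rfl
  intro k _
  ring

/-- If `A` is symmetric positive definite and `B` is symmetric positive semidefinite, then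
for every `Q` the Sylvester equation `A X + X B = Q` has exactly one solution. -/
theorem stmt_3 (m n : ℕ) (A : Matrix (Fin m) (Fin m) ℝ) (B : Matrix (Fin n) (Fin n) ℝ)
    (hAsymm : Aᵀ = A) (hApd : ∀ x : Fin m → ℝ, x ≠ 0 → 0 < x ⬝ᵥ A.mulVec x)
    (hBsymm : Bᵀ = B) (hBpsd : ∀ x : Fin n → ℝ, 0 ≤ x ⬝ᵥ B.mulVec x)
    (Q : Matrix (Fin m) (Fin n) ℝ) :
    ∃! X : Matrix (Fin m) (Fin n) ℝ, A * X + X * B = Q := by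
  have hApsd : ∀ x : Fin m → ℝ, 0 ≤ x ⬝ᵥ A.mulVec x := by
    intro x
    by_cases hx : x = 0
    · simp [hx]
    · exact le_of_lt (hApd x hx)
  set L : Matrix (Fin m) (Fin n) ℝ →ₗ[ℝ] Matrix (Fin m) (Fin n) ℝ :=
    { toFun := fun X => A * X + X * B
      map_add' := by intro X Y; simp [Matrix.mul_add, Matrix.add_mul]; abel
      map_smul' := by intro c X; simp [Matrix.mul_smul, Matrix.smul_mul, smul_add] } with hL
  have hinj : Function.Injective L := by
    rw [← LinearMap.ker_eq_bot, LinearMap.ker_eq_bot']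
    intro X hX
    simp only [hL, LinearMap.coe_mk, AddHom.coe_mk] at hX
    by_contra hne
    obtain ⟨i0, j0, hij⟩ : ∃ i j, X i j ≠ 0 := by
      by_contra h
      push_neg at h
      exact hne (by ext i j; simp [h])
    have htr : trace (Xᵀ * (A * X + X * B)) = 0 := by rw [hX]; simp
    rw [Matrix.mul_add, trace_add, trace_col, trace_row] at htr
    have h1 : 0 < ∑ j, (fun i => X i j) ⬝ᵥ A.mulVec (fun i => X i j) := by
      apply Finset.sum_pos' (fun j _ => hApsd _)
      refine ⟨j0, Finset.mem_univ _, hApd _ ?_⟩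
      intro h
      exact hij (congrFun h i0)
    have h2 : 0 ≤ ∑ i, (X i) ⬝ᵥ B.mulVec (X i) :=
      Finset.sum_nonneg (fun i _ => hBpsd _)
    linarith
  have hsurj : Function.Surjective L := (LinearMap.injective_iff_surjective).mp hinj
  obtain ⟨X, hXQ⟩ := hsurj Q
  exact ⟨X, hXQ, fun Y hY => hinj (show L Y = L X from hY.trans hXQ.symm)⟩
end

section
/- Assume RᵀR = I_L and μ > 0. If C ∈ ℝ^{L×N} satisfies the Sylvester equation [(F R)ᵀ(F R) + 3μ I_L] C + C (B Sm)(B Sm)ᵀ = (F R)ᵀ Y + Rᵀ X (B Sm)ᵀ + μ Σ_{t=1}^{3} (C + M_t/(2μ)), i.e., the ADMM C-update with each auxiliary variable G_t equal to C, then Rᵀ(R C B Sm − X)(B Sm)ᵀ + (F R)ᵀ(F R C − Y) − (1/2) Σ_{t=1}^{3} M_t = 0. -/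
open Matrix

/-- If `C` satisfies the ADMM C-update Sylvester equation with each auxiliary variable
`G_t` equal to `C`, then the stationarity KKT equation holds:
`Rᵀ(R C B Sm − X)(B Sm)ᵀ + (F R)ᵀ(F R C − Y) − (1/2) Σ_t M_t = 0`. -/
theorem stmt_8 (L N S s w : ℕ) (hL : 0 < L) (hN : 0 < N) (hS : 0 < S) (hs : 0 < s) (hw : 0 < w)
    (X : Matrix (Fin S) (Fin w) ℝ) (Y : Matrix (Fin s) (Fin N) ℝ)
    (R : Matrix (Fin S) (Fin L) ℝ) (B : Matrix (Fin N) (Fin N) ℝ)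
    (Sm : Matrix (Fin N) (Fin w) ℝ) (F : Matrix (Fin s) (Fin S) ℝ)
    (M : Fin 3 → Matrix (Fin L) (Fin N) ℝ) (μ : ℝ) (hμ : 0 < μ)
    (hR : Rᵀ * R = 1)
    (C : Matrix (Fin L) (Fin N) ℝ)
    (hC : ((F * R)ᵀ * (F * R) + (3 * μ) • 1) * C + C * ((B * Sm) * (B * Sm)ᵀ)
      = (F * R)ᵀ * Y + Rᵀ * X * (B * Sm)ᵀ + μ • ∑ t : Fin 3, (C + (2 * μ)⁻¹ • M t)) :
    Rᵀ * (R * C * B * Sm - X) * (B * Sm)ᵀ + (F * R)ᵀ * (F * R * C - Y)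
      - (1 / 2 : ℝ) • ∑ t : Fin 3, M t = 0 := by
  have hμ' : μ ≠ 0 := ne_of_gt hμ
  have hhalf : μ * (2 * μ)⁻¹ = 1 / 2 := by field_simp
  simp only [Finset.sum_add_distrib, Finset.sum_const, Finset.card_univ, Fintype.card_fin,
    smul_add, smul_smul, hhalf, ← Finset.smul_sum, add_mul, smul_mul_assoc, one_mul,
    ← Nat.cast_smul_eq_nsmul ℝ] at hC
  rw [show (μ * ((3:ℕ):ℝ)) = 3 * μ by push_cast; ring] at hC
  have eq1 : (F * R)ᵀ * (F * R) * C + C * ((B * Sm) * (B * Sm)ᵀ)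
      = (F * R)ᵀ * Y + Rᵀ * X * (B * Sm)ᵀ + (1/2 : ℝ) • ∑ t : Fin 3, M t := by
    have h := hC
    rw [Matrix.add_mul, Matrix.smul_mul, Matrix.one_mul] at h
    apply add_right_cancel (b := (3 * μ) • C)
    linear_combination (norm := abel) h
  have hRC : Rᵀ * (R * C * B * Sm) * (B * Sm)ᵀ = C * ((B * Sm) * (B * Sm)ᵀ) := by
    rw [show R * C * B * Sm = R * (C * (B * Sm)) by rw [Matrix.mul_assoc, Matrix.mul_assoc],
      ← Matrix.mul_assoc Rᵀ, hR, Matrix.one_mul, Matrix.mul_assoc]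
  rw [Matrix.mul_sub, Matrix.sub_mul, Matrix.mul_sub, hRC,
    show (F * R)ᵀ * (F * R * C) = (F * R)ᵀ * (F * R) * C from (Matrix.mul_assoc _ _ _).symm]
  linear_combination (norm := abel) eq1
end

section
/- Let a ≥ 0, λ > 0, ε > 0, and define f(x) = (1/2)(x − a)² + λ log(x + ε) for x > −ε. Set c₁ = a − ε and c₂ = c₁² − 4(λ − εa). If c₂ < 0, then f is strictly increasing on [0, ∞), and hence x = 0 is the unique global minimizer of f over [0, ∞). -/
open Set

/-- For `f(x) = (1/2)(x−a)² + λ log(x+ε)` with `a ≥ 0`, `λ > 0`, `ε > 0`: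
if `c₂ = (a−ε)² − 4(λ−εa) < 0`, then `f` is strictly increasing on `[0,∞)` and `x = 0`
is the unique global minimizer of `f` over `[0,∞)`. -/
theorem stmt_12 (a lam ε : ℝ) (ha : 0 ≤ a) (hlam : 0 < lam) (hε : 0 < ε)
    (f : ℝ → ℝ)
    (hf : ∀ x : ℝ, -ε < x → f x = (1 / 2) * (x - a) ^ 2 + lam * Real.log (x + ε))
    (hc₂ : (a - ε) ^ 2 - 4 * (lam - ε * a) < 0) :
    StrictMonoOn f (Ici 0) ∧ ∀ x : ℝ, 0 ≤ x → x ≠ 0 → f 0 < f x := by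
  set g : ℝ → ℝ := fun x => (1 / 2) * (x - a) ^ 2 + lam * Real.log (x + ε) with hg
  have hderiv : ∀ x : ℝ, 0 ≤ x → HasDerivAt g ((x - a) + lam * (x + ε)⁻¹) x := by
    intro x hx
    have hxε : x + ε ≠ 0 := by positivity
    have h1 : HasDerivAt (fun x : ℝ => (1 / 2) * (x - a) ^ 2) ((1/2) * (2 * (x - a))) x := by
      have : HasDerivAt (fun x : ℝ => (x - a) ^ 2) (2 * (x - a) ^ 1 * 1) x :=
        ((hasDerivAt_id x).sub_const a).pow 2
      simpa using this.const_mul (1/2 : ℝ)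
    have h2 : HasDerivAt (fun x : ℝ => lam * Real.log (x + ε)) (lam * ((x + ε)⁻¹ * 1)) x := by
      simpa using (((hasDerivAt_id x).add_const ε).log hxε).const_mul lam
    have := h1.add h2
    refine this.congr_deriv ?_
    ring
  have hpos : ∀ x : ℝ, 0 ≤ x → 0 < (x - a) + lam * (x + ε)⁻¹ := by
    intro x hx
    have hxε : 0 < x + ε := by positivity
    have hq : 0 < (x - a) * (x + ε) + lam := by nlinarith [sq_nonneg (2 * x + ε - a)]
    have h3 : 0 < ((x - a) * (x + ε) + lam) / (x + ε) := div_pos hq hxε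
    calc (0:ℝ) < ((x - a) * (x + ε) + lam) / (x + ε) := h3
      _ = (x - a) + lam * (x + ε)⁻¹ := by field_simp
  have hgmono : StrictMonoOn g (Ici 0) := by
    apply StrictMonoOn.mono (s := Ici 0) ?_ (le_refl _)
    apply strictMonoOn_of_deriv_pos (convex_Ici 0)
    · exact continuousOn_of_forall_continuousAt fun x hx => (hderiv x hx).continuousAt
    · intro x hx
      rw [interior_Ici] at hx
      rw [(hderiv x (le_of_lt hx)).deriv]
      exact hpos x (le_of_lt hx)
  have heq : EqOn f g (Ici 0) := fun x hx => hf x (lt_of_lt_of_le (by linarith) hx)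
  have hfmono : StrictMonoOn f (Ici 0) := fun x hx y hy hxy => by
    rw [heq hx, heq hy]; exact hgmono hx hy hxy
  refine ⟨hfmono, fun x hx hne => ?_⟩
  exact hfmono (self_mem_Ici) hx (lt_of_le_of_ne hx (Ne.symm hne))
end

section
/- Let a ≥ 0, λ > 0, ε > 0, and define f(x) = (1/2)(x − a)² + λ log(x + ε) for x > −ε. Set c₁ = a − ε and c₂ = c₁² − 4(λ − εa). If c₂ > 0, then f attains its global minimum over [0, ∞), and its minimum value equals min(f(0), f(x₀)) where x₀ = max(0, (c₁ + √c₂)/2); in particular, every global minimizer of f on [0, ∞) belongs to {0, x₀}. -/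
open Set

/-- For `f(x) = (1/2)(x−a)² + λ log(x+ε)` with `a ≥ 0`, `λ > 0`, `ε > 0`:
if `c₂ = (a−ε)² − 4(λ−εa) > 0`, then `f` attains its global minimum over `[0,∞)`, its
minimum value equals `min (f 0) (f x₀)` with `x₀ = max 0 ((c₁+√c₂)/2)`, and every global
minimizer of `f` on `[0,∞)` belongs to `{0, x₀}`. -/
theorem stmt_14 (a lam ε : ℝ) (ha : 0 ≤ a) (hlam : 0 < lam) (hε : 0 < ε)
    (f : ℝ → ℝ)
    (hf : ∀ x : ℝ, -ε < x → f x = (1 / 2) * (x - a) ^ 2 + lam * Real.log (x + ε))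
    (hc₂ : 0 < (a - ε) ^ 2 - 4 * (lam - ε * a))
    (x₀ : ℝ)
    (hx₀ : x₀ = max 0 (((a - ε) + Real.sqrt ((a - ε) ^ 2 - 4 * (lam - ε * a))) / 2)) :
    (∃ x : ℝ, 0 ≤ x ∧ (∀ y : ℝ, 0 ≤ y → f x ≤ f y) ∧ f x = min (f 0) (f x₀)) ∧
    (∀ x : ℝ, 0 ≤ x → (∀ y : ℝ, 0 ≤ y → f x ≤ f y) → x = 0 ∨ x = x₀) := by
  set s := Real.sqrt ((a - ε) ^ 2 - 4 * (lam - ε * a)) with hsdef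
  have hs0 : 0 < s := Real.sqrt_pos.mpr hc₂
  have hs2 : s * s = (a - ε) ^ 2 - 4 * (lam - ε * a) := Real.mul_self_sqrt hc₂.le
  set r₁ := ((a - ε) - s) / 2 with hr₁def
  set r₂ := ((a - ε) + s) / 2 with hr₂def
  have hr12 : r₁ < r₂ := by rw [hr₁def, hr₂def]; linarith
  have hr₂ε : -ε < r₂ := by rw [hr₂def]; nlinarith
  have hprod : (r₁ + ε) * (r₂ + ε) = lam := by
    rw [hr₁def, hr₂def]; nlinarith [hs2]
  have hr₁ε : -ε < r₁ := by nlinarith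
  have hx₀' : x₀ = max 0 r₂ := hx₀
  -- derivative
  have hderiv : ∀ x : ℝ, -ε < x → HasDerivAt f ((x - r₁) * (x - r₂) / (x + ε)) x := by
    intro x hx
    have hxε : 0 < x + ε := by linarith
    have hA : HasDerivAt (fun x : ℝ => (1 / 2) * (x - a) ^ 2) (x - a) x := by
      have h := (((hasDerivAt_id x).sub_const a).pow 2).const_mul (1 / 2 : ℝ)
      exact h.congr_deriv (by norm_num; ring)
    have hB : HasDerivAt (fun x : ℝ => Real.log (x + ε)) (1 / (x + ε)) x := by
      have h := (Real.hasDerivAt_log (ne_of_gt hxε)).comp x ((hasDerivAt_id x).add_const ε)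
      simpa [one_div, Function.comp_def] using h
    have h1 := hA.add (hB.const_mul lam)
    have heq : (x - a) + lam * (1 / (x + ε)) = (x - r₁) * (x - r₂) / (x + ε) := by
      rw [hr₁def, hr₂def]
      field_simp
      ring_nf
      nlinarith [hs2]
    rw [heq] at h1
    refine h1.congr_of_eventuallyEq ?_
    filter_upwards [Ioi_mem_nhds hx] with y hy
    exact hf y hy
  have hcont : ∀ x : ℝ, -ε < x → ContinuousAt f x := fun x hx => (hderiv x hx).continuousAt
  have hmono2 : StrictMonoOn f (Ici r₂) := by
    apply strictMonoOn_of_deriv_pos (convex_Ici r₂)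
    · exact fun x hx => (hcont x (hr₂ε.trans_le hx)).continuousWithinAt
    · intro x hx
      rw [interior_Ici] at hx
      have hx2 : r₂ < x := hx
      have hx' : -ε < x := hr₂ε.trans hx2
      rw [(hderiv x hx').deriv]
      exact div_pos (mul_pos (by linarith) (by linarith [hx2])) (by linarith)
  have hanti : StrictAntiOn f (Icc r₁ r₂) := by
    apply strictAntiOn_of_deriv_neg (convex_Icc r₁ r₂)
    · exact fun x hx => (hcont x (hr₁ε.trans_le hx.1)).continuousWithinAt
    · intro x hx
      rw [interior_Icc] at hx
      have hx' : -ε < x := hr₁ε.trans hx.1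
      rw [(hderiv x hx').deriv]
      exact div_neg_of_neg_of_pos
        (mul_neg_of_pos_of_neg (by linarith [hx.1]) (by linarith [hx.2])) (by linarith)
  have hmono1 : StrictMonoOn f (Ioc (-ε) r₁) := by
    apply strictMonoOn_of_deriv_pos (convex_Ioc (-ε) r₁)
    · exact fun x hx => (hcont x hx.1).continuousWithinAt
    · intro x hx
      rw [interior_Ioc] at hx
      rw [(hderiv x hx.1).deriv]
      exact div_pos (mul_pos_of_neg_of_neg (by linarith [hx.2]) (by linarith [hx.2]))
        (by linarith [hx.1])
  -- key lower bound
  have hkey : ∀ y : ℝ, 0 ≤ y → min (f 0) (f x₀) ≤ f y := by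
    intro y hy
    rcases le_or_gt r₂ 0 with h2 | h2
    · -- f increasing on [0,∞)
      have hx0 : x₀ = 0 := by rw [hx₀']; exact max_eq_left h2
      rcases eq_or_lt_of_le hy with h | h
      · rw [hx0, ← h]; exact min_le_left _ _
      · refine le_trans (min_le_left _ _) ?_
        exact (hmono2 (mem_Ici.mpr h2) (mem_Ici.mpr (h2.trans hy)) h).le
    · have hx0 : x₀ = r₂ := by rw [hx₀']; exact max_eq_right h2.le
      rcases le_or_gt r₂ y with h | h
      · refine le_trans (min_le_right _ _) ?_
        rw [hx0]
        rcases eq_or_lt_of_le h with h' | h'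
        · rw [h']
        · exact (hmono2 (mem_Ici.mpr le_rfl) (mem_Ici.mpr h) h').le
      · rcases le_or_gt r₁ y with h1 | h1
        · refine le_trans (min_le_right _ _) ?_
          rw [hx0]
          exact (hanti (mem_Icc.mpr ⟨h1, h.le⟩) (mem_Icc.mpr ⟨hr12.le, le_rfl⟩) h).le
        · -- 0 ≤ y < r₁
          refine le_trans (min_le_left _ _) ?_
          rcases eq_or_lt_of_le hy with h' | h'
          · rw [h']
          · exact (hmono1 (mem_Ioc.mpr ⟨by linarith, by linarith⟩)
              (mem_Ioc.mpr ⟨by linarith, h1.le⟩) h').le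
  constructor
  · rcases le_total (f 0) (f x₀) with h | h
    · exact ⟨0, le_rfl, fun y hy => (min_eq_left h) ▸ hkey y hy, (min_eq_left h).symm⟩
    · have hx₀nn : 0 ≤ x₀ := by rw [hx₀']; exact le_max_left _ _
      exact ⟨x₀, hx₀nn, fun y hy => (min_eq_right h) ▸ hkey y hy, (min_eq_right h).symm⟩
  · intro x hx hminx
    by_contra hcon
    push_neg at hcon
    obtain ⟨hne0, hnex₀⟩ := hcon
    have hxpos : 0 < x := lt_of_le_of_ne hx (Ne.symm hne0)
    rcases le_or_gt r₂ 0 with h2 | h2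
    · have h1 : f 0 < f x := hmono2 (mem_Ici.mpr h2) (mem_Ici.mpr (h2.trans hx)) hxpos
      exact absurd (hminx 0 le_rfl) (not_le.mpr h1)
    · have hx0 : x₀ = r₂ := by rw [hx₀']; exact max_eq_right h2.le
      have hner₂ : x ≠ r₂ := hx0 ▸ hnex₀
      rcases lt_or_gt_of_ne hner₂ with h | h
      · rcases le_or_gt r₁ x with h1 | h1
        · have : f r₂ < f x := hanti (mem_Icc.mpr ⟨h1, h.le⟩) (mem_Icc.mpr ⟨hr12.le, le_rfl⟩) h
          exact absurd (hminx r₂ h2.le) (not_le.mpr this)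
        · have : f 0 < f x := hmono1 (mem_Ioc.mpr ⟨by linarith, by linarith⟩)
            (mem_Ioc.mpr ⟨by linarith, h1.le⟩) hxpos
          exact absurd (hminx 0 le_rfl) (not_le.mpr this)
      · have : f r₂ < f x := hmono2 (mem_Ici.mpr le_rfl) (mem_Ici.mpr h.le) h
        exact absurd (hminx r₂ h2.le) (not_le.mpr this)
end
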